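/- Let p ≥ 2 be a natural number. For every permutation σ of Fin p, the encoding N(σ) = Σ_{k=0}^{p−1} p^k · σ(k) satisfies the bounds Σ_{k=0}^{p−1} (p−1−k) · p^k ≤ N(σ) ≤ Σ_{k=0}^{p−1} k · p^k, with the lower bound attained by the order-reversing permutation k ↦ p−1−k and the upper bound attained by the identity permutation. Moreover these extreme values have the closed forms Σ_{k=0}^{p−1} (p−1−k)·p^k = (p^p − p)/(p−1)^2 − 1 and Σ_{k=0}^{p−1} k·p^k = p^p − (p^p − p)/(p−1)^2, the divisions being exact. -/

import Mathlib

/-- The encoding of a permutation of `Fin p` as a natural number whose base-`p`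
digits are the values of the permutation. -/
def enc (p : ℕ) (σ : Equiv.Perm (Fin p)) : ℕ := ∑ k : Fin p, p ^ (k : ℕ) * (σ k : ℕ)

private lemma sumk_aux (x : ℤ) (n : ℕ) :
    (x - 1) ^ 2 * (∑ k ∈ Finset.range n, (k : ℤ) * x ^ k)
      = ((n : ℤ) - 1) * x ^ (n + 1) - (n : ℤ) * x ^ n + x := by
  induction n with
  | zero => simp
  | succ n ih =>
    rw [Finset.sum_range_succ, mul_add]
    rw [ih]
    push_cast
    ring

theorem encoding_bounds (p : ℕ) (hp : 2 ≤ p) :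
    (∀ σ : Equiv.Perm (Fin p),
      ∑ k ∈ Finset.range p, (p - 1 - k) * p ^ k ≤ enc p σ ∧
      enc p σ ≤ ∑ k ∈ Finset.range p, k * p ^ k) ∧
    enc p (Fin.revPerm : Equiv.Perm (Fin p)) = ∑ k ∈ Finset.range p, (p - 1 - k) * p ^ k ∧
    enc p (1 : Equiv.Perm (Fin p)) = ∑ k ∈ Finset.range p, k * p ^ k ∧
    ∑ k ∈ Finset.range p, (p - 1 - k) * p ^ k = (p ^ p - p) / (p - 1) ^ 2 - 1 ∧
    ∑ k ∈ Finset.range p, k * p ^ k = p ^ p - (p ^ p - p) / (p - 1) ^ 2 ∧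
    (p - 1) ^ 2 ∣ p ^ p - p := by
  set T := ∑ k ∈ Finset.range p, (p - 1 - k) * p ^ k with hT
  set S := ∑ k ∈ Finset.range p, k * p ^ k with hS
  -- casts
  have hTZ : (T : ℤ) = ∑ k ∈ Finset.range p, ((p : ℤ) - 1 - k) * (p : ℤ) ^ k := by
    rw [hT]
    push_cast
    refine Finset.sum_congr rfl fun k hk => ?_
    have hk' : k < p := Finset.mem_range.mp hk
    have : ((p - 1 - k : ℕ) : ℤ) = (p : ℤ) - 1 - k := by
      have : k ≤ p - 1 := by omega
      omega
    rw [this]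
  have hSZ : (S : ℤ) = ∑ k ∈ Finset.range p, (k : ℤ) * (p : ℤ) ^ k := by
    rw [hS]; push_cast; rfl
  have hgeom : ((p : ℤ) - 1) * (∑ k ∈ Finset.range p, (p : ℤ) ^ k) = (p : ℤ) ^ p - 1 := by
    have := geom_sum_mul (p : ℤ) p
    linarith [this]
  have hsumk := sumk_aux (p : ℤ) p
  -- key identity in ℤ
  have hkeyZ : ((p : ℤ) - 1) ^ 2 * ((T : ℤ) + 1) = (p : ℤ) ^ p - p := by
    have hTG : (T : ℤ) = ((p : ℤ) - 1) * (∑ k ∈ Finset.range p, (p : ℤ) ^ k) - (S : ℤ) := by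
      rw [hTZ, hSZ, Finset.mul_sum, ← Finset.sum_sub_distrib]
      refine Finset.sum_congr rfl fun k _ => by ring
    rw [hTG, hSZ]
    linear_combination ((p:ℤ) - 1) ^ 2 * hgeom - hsumk
  have hstZ : (S : ℤ) + (T : ℤ) + 1 = (p : ℤ) ^ p := by
    have hTG : (T : ℤ) = ((p : ℤ) - 1) * (∑ k ∈ Finset.range p, (p : ℤ) ^ k) - (S : ℤ) := by
      rw [hTZ, hSZ, Finset.mul_sum, ← Finset.sum_sub_distrib]
      refine Finset.sum_congr rfl fun k _ => by ring
    rw [hTG]; linarith [hgeom]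
  -- nat key identity
  have hpp : p ≤ p ^ p := Nat.le_self_pow (by omega) p
  have hkey : (p - 1) ^ 2 * (T + 1) = p ^ p - p := by
    have h1 : ((p - 1 : ℕ) : ℤ) = (p : ℤ) - 1 := by omega
    have h2 : ((p ^ p - p : ℕ) : ℤ) = (p : ℤ) ^ p - p := by
      push_cast [Nat.cast_sub hpp]; ring
    have : (((p - 1) ^ 2 * (T + 1) : ℕ) : ℤ) = ((p ^ p - p : ℕ) : ℤ) := by
      push_cast [h1, h2]
      push_cast at hkeyZ
      linarith [hkeyZ]
    exact_mod_cast this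
  have hst : S + T + 1 = p ^ p := by exact_mod_cast hstZ
  have hdvd : (p - 1) ^ 2 ∣ p ^ p - p := ⟨T + 1, hkey.symm⟩
  have hdivval : (p ^ p - p) / (p - 1) ^ 2 = T + 1 := by
    rw [← hkey, Nat.mul_div_cancel_left]
    have : p - 1 ≠ 0 := by omega
    positivity
  -- encoding values
  have hencid : enc p (1 : Equiv.Perm (Fin p)) = S := by
    rw [enc, hS]
    simp only [Equiv.Perm.one_apply]
    rw [Fin.sum_univ_eq_sum_range (fun m => p ^ m * m)]
    exact Finset.sum_congr rfl fun k _ => mul_comm _ _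
  have hencrev : enc p (Fin.revPerm : Equiv.Perm (Fin p)) = T := by
    rw [enc, hT]
    simp only [Fin.revPerm_apply, Fin.val_rev]
    rw [Fin.sum_univ_eq_sum_range (fun m => p ^ m * (p - (m + 1)))]
    refine Finset.sum_congr rfl fun k hk => ?_
    have hk' : k < p := Finset.mem_range.mp hk
    have h1 : p - (k + 1) = p - 1 - k := by omega
    rw [h1, mul_comm]
  -- rearrangement bounds in ℤ
  have hQ : ∀ σ : Equiv.Perm (Fin p), T ≤ enc p σ ∧ enc p σ ≤ S := by
    intro σ
    set f : Fin p → ℤ := fun k => (p : ℤ) ^ (k : ℕ) with hf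
    set g : Fin p → ℤ := fun k => ((k : ℕ) : ℤ) with hg
    have hpos : (1 : ℤ) ≤ (p : ℤ) := by exact_mod_cast Nat.one_le_of_lt hp
    have hmono : Monovary f g := by
      intro i j hij
      have : (i : ℕ) < (j : ℕ) := by simpa [hg] using hij
      exact pow_le_pow_right₀ hpos (le_of_lt this)
    have hencZ : ∀ τ : Equiv.Perm (Fin p), ((enc p τ : ℕ) : ℤ) = ∑ k : Fin p, f k * g (τ k) := by
      intro τ; rw [enc]; push_cast; rfl
    constructor
    · -- lower bound
      set h : Fin p → ℤ := fun k => ((Fin.rev k : ℕ) : ℤ) with hh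
      have hanti : Antivary f h := by
        intro i j hij
        have hr : (Fin.rev i : ℕ) < (Fin.rev j : ℕ) := by
          have h' : j < i := by simpa [hh] using hij
          exact Fin.rev_lt_rev.mpr h'
        have hji : (j : ℕ) < (i : ℕ) := by
          have := Fin.rev_lt_rev.mp (show Fin.rev i < Fin.rev j from Fin.lt_def.mpr hr)
          exact this
        exact pow_le_pow_right₀ hpos (le_of_lt hji)
      have := hanti.sum_mul_le_sum_mul_comp_perm
        (σ := (Fin.revPerm : Equiv.Perm (Fin p)) * σ)
      have heq : ∑ k : Fin p, f k * h (((Fin.revPerm : Equiv.Perm (Fin p)) * σ) k)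
          = ∑ k : Fin p, f k * g (σ k) := by
        refine Finset.sum_congr rfl fun k _ => ?_
        have hlt := (σ k).isLt
        simp [hh, hg, Equiv.Perm.mul_apply, Fin.rev_rev]
        omega
      have heq2 : ∑ k : Fin p, f k * h k = (T : ℤ) := by
        rw [← hencrev, hencZ Fin.revPerm]
        refine Finset.sum_congr rfl fun k _ => by simp [hh, hg]
      rw [heq, heq2, ← hencZ σ] at this
      exact_mod_cast this
    · -- upper bound
      have := hmono.sum_mul_comp_perm_le_sum_mul (σ := σ)
      have heq2 : ∑ k : Fin p, f k * g k = (S : ℤ) := by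
        rw [← hencid, hencZ 1]; simp
      rw [heq2, ← hencZ σ] at this
      exact_mod_cast this
  refine ⟨hQ, hencrev, hencid, ?_, ?_, hdvd⟩
  · rw [hdivval]; omega
  · rw [hdivval]; omega
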